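/- Let (m_k)_{k≥1} be integers with m_k ≥ 2, define m̃_0 = 1, m̃_k = m_k^{m̃_{k-1}}, and let (s_k) be reals with s_k ≥ log 2 and s_k ≤ A·s_{k+1} for all k ≥ M₀ (for some A > 0, M₀ ∈ ℕ). Then ∑_{k=1}^{n} m̃_{k-1}·s_k / (m̃_{n-1}·s_n) → 1 as n → ∞. -/

import Mathlib

lemma aux_sq_le_two_pow {n : ℕ} (h : 4 ≤ n) : n ^ 2 ≤ 2 ^ n := by
  induction n, h using Nat.le_induction with
  | base => norm_num
  | succ n hn ih =>
    have h1 : 2 * n + 1 ≤ n ^ 2 := by nlinarith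
    have h2 : 2 ^ (n + 1) = 2 * 2 ^ n := by rw [pow_succ]; ring
    nlinarith

lemma aux_tendsto (D : ℕ → ℝ) (hpos : ∀ k, 0 < D k)
    (htop : Filter.Tendsto D Filter.atTop Filter.atTop)
    (hstep : ∀ r : ℝ, 0 < r → ∃ K, 1 ≤ K ∧ ∀ k, K ≤ k → D k ≤ r * D (k + 1)) :
    Filter.Tendsto (fun n => (∑ k ∈ Finset.Icc 1 n, D k) / D n)
      Filter.atTop (nhds 1) := by
  rw [Metric.tendsto_atTop]
  intro ε hε
  set r : ℝ := min (1 / 2) (ε / 4) with hrdef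
  have hr0 : 0 < r := lt_min (by norm_num) (by positivity)
  have hr2 : r ≤ 1 / 2 := min_le_left _ _
  have h1r : 0 < 1 - r := by linarith
  set c : ℝ := r / (1 - r) with hcdef
  have hc0 : 0 < c := div_pos hr0 h1r
  have hcr : (c + 1) * r = c := by
    rw [hcdef]; field_simp; ring
  have hc2 : c ≤ ε / 2 := by
    have h1 : c ≤ 2 * r := by rw [hcdef, div_le_iff₀ h1r]; nlinarith
    have h2 : r ≤ ε / 4 := min_le_right _ _
    linarith
  obtain ⟨K, hK1, hKstep⟩ := hstep r hr0
  have sumlem : ∀ n, K ≤ n → (∑ k ∈ Finset.Icc K (n - 1), D k) ≤ c * D n := by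
    intro n hn
    induction n, hn using Nat.le_induction with
    | base =>
      rw [show Finset.Icc K (K - 1) = ∅ from Finset.Icc_eq_empty (by omega),
        Finset.sum_empty]
      exact mul_nonneg hc0.le (hpos K).le
    | succ n hn ih =>
      have e1 : n - 1 + 1 = n := by omega
      have hs1 : (∑ k ∈ Finset.Icc K n, D k)
          = (∑ k ∈ Finset.Icc K (n - 1), D k) + D n := by
        conv_lhs => rw [← e1]
        rw [Finset.sum_Icc_succ_top (by omega), e1]
      simp only [Nat.add_sub_cancel]
      rw [hs1]
      have h1 := hKstep n hn
      have h2 : (c + 1) * D n ≤ (c + 1) * (r * D (n + 1)) :=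
        mul_le_mul_of_nonneg_left h1 (by linarith)
      calc (∑ k ∈ Finset.Icc K (n - 1), D k) + D n ≤ c * D n + D n := by linarith
        _ = (c + 1) * D n := by ring
        _ ≤ (c + 1) * (r * D (n + 1)) := h2
        _ = ((c + 1) * r) * D (n + 1) := by ring
        _ = c * D (n + 1) := by rw [hcr]
  set B : ℝ := ∑ k ∈ Finset.Icc 1 (K - 1), D k with hBdef
  have hB0 : 0 ≤ B := Finset.sum_nonneg fun k _ => (hpos k).le
  obtain ⟨N', hN'⟩ := Filter.eventually_atTop.mp
    (htop.eventually_ge_atTop (2 * B / ε + 1))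
  refine ⟨max K N', fun n hn => ?_⟩
  have hnK : K ≤ n := le_trans (le_max_left _ _) hn
  have hDn := hpos n
  have hDbig : 2 * B / ε + 1 ≤ D n := hN' n (le_trans (le_max_right _ _) hn)
  have hBlt : B < (ε / 2) * D n := by
    have h1 : (ε / 2) * (2 * B / ε) = B := by field_simp
    nlinarith [hε]
  have hsplit : (∑ k ∈ Finset.Icc 1 n, D k)
      = B + (∑ k ∈ Finset.Icc K (n - 1), D k) + D n := by
    have e1 : n - 1 + 1 = n := by omega
    have e2 : K - 1 + 1 = K := by omega
    have h1 : (∑ k ∈ Finset.Icc 1 n, D k)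
        = (∑ k ∈ Finset.Icc 1 (n - 1), D k) + D n := by
      conv_lhs => rw [← e1]
      rw [Finset.sum_Icc_succ_top (by omega), e1]
    have h2 : (∑ k ∈ Finset.Icc 1 (n - 1), D k)
        = B + (∑ k ∈ Finset.Icc K (n - 1), D k) := by
      rw [hBdef,
        show Finset.Icc 1 (n - 1) = Finset.Ioc 0 (n - 1) from by
          rw [← Finset.Icc_add_one_left_eq_Ioc]; rfl,
        show Finset.Icc 1 (K - 1) = Finset.Ioc 0 (K - 1) from by
          rw [← Finset.Icc_add_one_left_eq_Ioc]; rfl,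
        show Finset.Icc K (n - 1) = Finset.Ioc (K - 1) (n - 1) from by
          rw [← Finset.Icc_add_one_left_eq_Ioc]; congr 1; omega]
      exact (Finset.sum_Ioc_consecutive _ (by omega) (by omega)).symm
    rw [h1, h2]
  have hS := sumlem n hnK
  have hSnn : 0 ≤ ∑ k ∈ Finset.Icc K (n - 1), D k :=
    Finset.sum_nonneg fun k _ => (hpos k).le
  rw [Real.dist_eq]
  show |(∑ k ∈ Finset.Icc 1 n, D k) / D n - 1| < ε
  have hfn : (∑ k ∈ Finset.Icc 1 n, D k) / D n - 1
      = (B + ∑ k ∈ Finset.Icc K (n - 1), D k) / D n := by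
    rw [hsplit]; field_simp; ring
  rw [hfn, abs_of_nonneg (div_nonneg (by linarith) hDn.le), div_lt_iff₀ hDn]
  have hS2 : (∑ k ∈ Finset.Icc K (n - 1), D k) ≤ (ε / 2) * D n :=
    le_trans hS (by nlinarith)
  linarith

/-- With the tower sequence `m̃` and a good sequence `s`, the partial sums
`∑_{k=1}^n m̃_{k-1} s_k` are asymptotic to the last term `m̃_{n-1} s_n`. -/
theorem stmt_13 (m mt : ℕ → ℕ) (hm : ∀ k ≥ 1, 2 ≤ m k)
    (h0 : mt 0 = 1) (hrec : ∀ k ≥ 1, mt k = m k ^ mt (k - 1))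
    (s : ℕ → ℝ) (hs : ∀ k, Real.log 2 ≤ s k)
    (A : ℝ) (hA : 0 < A) (M₀ : ℕ) (hgood : ∀ k ≥ M₀, s k ≤ A * s (k + 1)) :
    Filter.Tendsto
      (fun n => (∑ k ∈ Finset.Icc 1 n, (mt (k - 1) : ℝ) * s k) / ((mt (n - 1) : ℝ) * s n))
      Filter.atTop (nhds 1) := by
  have hlog2 : 0 < Real.log 2 := Real.log_pos (by norm_num)
  have hspos : ∀ k, 0 < s k := fun k => lt_of_lt_of_le hlog2 (hs k)
  have hmt1 : ∀ k, 1 ≤ mt k := by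
    intro k
    cases k with
    | zero => simp [h0]
    | succ p =>
      rw [hrec (p + 1) (by omega)]
      exact Nat.one_le_pow _ _ (by have := hm (p + 1) (by omega); omega)
  have hpow : ∀ k, 1 ≤ k → 2 ^ mt (k - 1) ≤ mt k := by
    intro k hk
    rw [hrec k hk]
    exact Nat.pow_le_pow_left (hm k hk) _
  have hge : ∀ n, n ≤ mt n := by
    intro n
    induction n with
    | zero => exact Nat.zero_le _
    | succ p ih =>
      have h1 := hpow (p + 1) (by omega)
      simp only [Nat.add_sub_cancel] at h1
      have h2 := Nat.lt_two_pow_self (n := mt p)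
      omega
  apply aux_tendsto (fun k => (mt (k - 1) : ℝ) * s k)
  · intro k
    exact mul_pos (by exact_mod_cast hmt1 (k - 1)) (hspos k)
  · apply Filter.tendsto_atTop_mono (f := fun n : ℕ => ((n : ℝ) - 1) * Real.log 2)
    · intro n
      have h0' : ((n - 1 : ℕ) : ℝ) ≤ (mt (n - 1) : ℝ) := Nat.cast_le.mpr (hge _)
      have h1 : (n : ℝ) - 1 ≤ ((n - 1 : ℕ) : ℝ) := by
        rcases Nat.eq_zero_or_pos n with h | h
        · subst h; norm_num
        · rw [Nat.cast_sub h]; simp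
      exact mul_le_mul (by linarith) (hs n) hlog2.le (Nat.cast_nonneg _)
    · exact (Filter.tendsto_atTop_add_const_right _ (-1)
        (tendsto_natCast_atTop_atTop (R := ℝ))).atTop_mul_const hlog2 |>.congr
        (fun n => by ring)
  · intro r hr
    set C : ℕ := ⌈A / r⌉₊ + 1 with hCdef
    have hAC : A ≤ r * C := by
      have h1 : A / r ≤ (⌈A / r⌉₊ : ℝ) := Nat.le_ceil _
      have h2 := (div_le_iff₀ hr).mp h1
      have h3 : ((C : ℕ) : ℝ) = (⌈A / r⌉₊ : ℝ) + 1 := by rw [hCdef]; push_cast; ring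
      nlinarith
    refine ⟨max (M₀ + 1) (max C 4 + 1), by omega, fun k hk => ?_⟩
    have hmax1 := le_max_left (M₀ + 1) (max C 4 + 1)
    have hmax2 := le_max_right (M₀ + 1) (max C 4 + 1)
    have hgrow : C * mt (k - 1) ≤ mt k := by
      have hx4 : max C 4 ≤ mt (k - 1) := le_trans (by omega) (hge (k - 1))
      have h4 : 4 ≤ mt (k - 1) := le_trans (le_max_right C 4) hx4
      have hC : C ≤ mt (k - 1) := le_trans (le_max_left C 4) hx4
      calc C * mt (k - 1) ≤ mt (k - 1) * mt (k - 1) := Nat.mul_le_mul_right _ hC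
        _ ≤ 2 ^ mt (k - 1) := by rw [← pow_two]; exact aux_sq_le_two_pow h4
        _ ≤ mt k := hpow k (by omega)
    simp only [Nat.add_sub_cancel]
    have hM : s k ≤ A * s (k + 1) := hgood k (by omega)
    have h2 : (C : ℝ) * (mt (k - 1) : ℝ) ≤ (mt k : ℝ) := by exact_mod_cast hgrow
    have hmtnn : (0 : ℝ) ≤ (mt (k - 1) : ℝ) := Nat.cast_nonneg _
    calc (mt (k - 1) : ℝ) * s k
        ≤ (mt (k - 1) : ℝ) * (A * s (k + 1)) := mul_le_mul_of_nonneg_left hM hmtnn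
      _ = A * ((mt (k - 1) : ℝ) * s (k + 1)) := by ring
      _ ≤ (r * C) * ((mt (k - 1) : ℝ) * s (k + 1)) :=
          mul_le_mul_of_nonneg_right hAC (mul_nonneg hmtnn (hspos _).le)
      _ = r * (((C : ℝ) * (mt (k - 1) : ℝ)) * s (k + 1)) := by ring
      _ ≤ r * ((mt k : ℝ) * s (k + 1)) := by
          apply mul_le_mul_of_nonneg_left _ hr.le
          exact mul_le_mul_of_nonneg_right h2 (hspos _).le
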